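/- Fix a ∈ (0, 1/2). For odd n ∈ ℕ set m = (n−1)/2. Then there exist C > 0 and N such that for all odd n ≥ N and all x ∈ [n^{−a}, π − n^{−a}], |Σ_{j=0}^{m} cos²((j + (n+1)/4)x) − n/4| ≤ C n^{a}. -/

import Mathlib

open Real Set

lemma cos_sum_bound (θ x : ℝ) (M : ℕ) (hx : Real.sin x ≠ 0) :
    |∑ j ∈ Finset.range M, Real.cos (θ + 2 * j * x)| ≤ 1 / |Real.sin x| := by
  have hw : Complex.exp (2 * x * Complex.I) ≠ 1 := by
    intro h
    rw [Complex.exp_eq_one_iff] at h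
    obtain ⟨k, hk⟩ := h
    have h2 : ((x : ℂ) - k * π) * (2 * Complex.I) = 0 := by
      push_cast at hk ⊢
      linear_combination hk
    have hxr : x = k * π := by
      have h3 : (x : ℂ) = ((k * π : ℝ) : ℂ) := by
        rcases mul_eq_zero.mp h2 with h | h
        · push_cast
          linear_combination h
        · exact absurd h (by simp [Complex.I_ne_zero])
      exact_mod_cast h3
    exact hx (by rw [hxr]; exact Real.sin_int_mul_pi k)
  have key : ∑ j ∈ Finset.range M, Complex.exp ((θ + 2 * j * x) * Complex.I)
      = Complex.exp (θ * Complex.I) *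
        ((Complex.exp (2 * x * Complex.I)) ^ M - 1) / (Complex.exp (2 * x * Complex.I) - 1) := by
    rw [mul_div_assoc, ← geom_sum_eq hw, Finset.mul_sum]
    refine Finset.sum_congr rfl fun j _ => ?_
    rw [← Complex.exp_nat_mul, ← Complex.exp_add]
    congr 1
    push_cast
    ring
  -- abs of denominator
  have habsden : ‖Complex.exp (2 * x * Complex.I) - 1‖ = 2 * |Real.sin x| := by
    have : Complex.exp (2 * x * Complex.I) - 1
        = (Real.cos (2 * x) - 1 : ℝ) + (Real.sin (2 * x) : ℝ) * Complex.I := by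
      rw [show ((2:ℂ) * x * Complex.I) = ((2 * x : ℝ) : ℂ) * Complex.I by push_cast; ring,
        Complex.exp_mul_I]
      push_cast
      ring
    rw [this]
    rw [Complex.norm_def, Complex.normSq_add_mul_I]
    have h1 : (Real.cos (2*x) - 1) ^ 2 + Real.sin (2*x) ^ 2 = (2 * |Real.sin x|) ^ 2 := by
      have hc : Real.cos (2*x) = 1 - 2 * Real.sin x ^ 2 := by
        rw [Real.cos_two_mul, ← Real.sin_sq_add_cos_sq x]; ring
      have e3 : (2 * |Real.sin x|) ^ 2 = 4 * Real.sin x ^ 2 := by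
        rw [mul_pow, sq_abs]; ring
      rw [e3, Real.sin_two_mul, Real.cos_two_mul]
      linear_combination (4 * Real.cos x ^ 2 - 4) * Real.sin_sq_add_cos_sq x
    rw [h1, Real.sqrt_sq (by positivity)]
  have hre : ∑ j ∈ Finset.range M, Real.cos (θ + 2 * j * x)
      = (∑ j ∈ Finset.range M, Complex.exp ((θ + 2 * j * x) * Complex.I)).re := by
    rw [Complex.re_sum]
    apply Finset.sum_congr rfl
    intro j _
    rw [show ((θ : ℂ) + 2 * j * x) * Complex.I = ((θ + 2 * j * x : ℝ) : ℂ) * Complex.I by push_cast; ring,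
      Complex.exp_ofReal_mul_I_re]
  rw [hre]
  calc |(∑ j ∈ Finset.range M, Complex.exp ((θ + 2 * j * x) * Complex.I)).re|
      ≤ ‖∑ j ∈ Finset.range M, Complex.exp ((θ + 2 * j * x) * Complex.I)‖ :=
        Complex.abs_re_le_norm _
    _ ≤ 1 / |Real.sin x| := by
        rw [key, norm_div, habsden, norm_mul, Complex.norm_exp_ofReal_mul_I, one_mul]
        rw [div_le_div_iff₀ (by positivity) (by positivity)]
        have h2 : ‖(Complex.exp (2 * x * Complex.I)) ^ M - 1‖ ≤ 2 := by
          calc ‖(Complex.exp (2 * x * Complex.I)) ^ M - 1‖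
              ≤ ‖(Complex.exp (2 * x * Complex.I)) ^ M‖ + ‖(1:ℂ)‖ :=
                norm_sub_le _ _
            _ ≤ 2 := by
                rw [norm_pow]
                rw [show ((2:ℂ) * x * Complex.I) = ((2 * x : ℝ) : ℂ) * Complex.I by push_cast; ring,
                  Complex.norm_exp_ofReal_mul_I]
                norm_num
        nlinarith [abs_nonneg (Real.sin x)]

theorem estimate_A_two_blocks_odd
    (ν : ℝ) (hν : ν ∈ Set.Ioo (0 : ℝ) (1 / 2)) :
    ∃ C > 0, ∃ N : ℕ, ∀ n ≥ N, Odd n →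
      ∀ x ∈ Set.Icc ((n : ℝ) ^ (-ν)) (π - (n : ℝ) ^ (-ν)),
        |(∑ j ∈ Finset.range ((n - 1) / 2 + 1),
            Real.cos (((j : ℝ) + ((n : ℝ) + 1) / 4) * x) ^ 2) - (n : ℝ) / 4|
          ≤ C * (n : ℝ) ^ ν := by
  obtain ⟨hν0, hν2⟩ := hν
  refine ⟨1 + π, by positivity, 1, fun n hn hodd x hx => ?_⟩
  obtain ⟨k, hk⟩ := hodd
  have hn1 : (1:ℝ) ≤ n := by exact_mod_cast hn
  have hnpos : (0:ℝ) < n := by linarith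
  set ε : ℝ := (n : ℝ) ^ (-ν) with hε
  have hεpos : 0 < ε := Real.rpow_pos_of_pos hnpos _
  have hεle1 : ε ≤ 1 := Real.rpow_le_one_of_one_le_of_nonpos hn1 (by linarith)
  have hεpi2 : ε ≤ π / 2 := by nlinarith [Real.pi_gt_three]
  obtain ⟨hx1, hx2⟩ := hx
  have hxpos : 0 < x := lt_of_lt_of_le hεpos hx1
  have hsinmono : Real.sin ε ≤ Real.sin x := by
    rcases le_or_gt x (π / 2) with h | h
    · exact Real.strictMonoOn_sin.monotoneOn ⟨by linarith, hεpi2⟩ ⟨by linarith, h⟩ hx1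
    · rw [← Real.sin_pi_sub x]
      exact Real.strictMonoOn_sin.monotoneOn ⟨by linarith, hεpi2⟩
        ⟨by linarith, by linarith⟩ (by linarith)
  have hjordan : 2 / π * ε ≤ Real.sin ε := Real.mul_le_sin hεpos.le hεpi2
  have hsinpos : 0 < Real.sin x := by
    have : 0 < 2 / π * ε := by positivity
    linarith
  have hsinne : Real.sin x ≠ 0 := ne_of_gt hsinpos
  -- rewrite the sum
  have hterm : ∀ j ∈ Finset.range ((n - 1) / 2 + 1),
      Real.cos (((j : ℝ) + ((n : ℝ) + 1) / 4) * x) ^ 2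
        = 1 / 2 + Real.cos (((n : ℝ) + 1) / 2 * x + 2 * j * x) / 2 := by
    intro j _
    rw [Real.cos_sq]
    ring_nf
  rw [Finset.sum_congr rfl hterm, Finset.sum_add_distrib, Finset.sum_const,
    Finset.card_range, ← Finset.sum_div]
  have hcard : (((n - 1) / 2 + 1 : ℕ) : ℝ) = ((n : ℝ) + 1) / 2 := by
    have h1 : (n - 1) / 2 + 1 = k + 1 := by omega
    have h2 : (n : ℝ) = 2 * k + 1 := by exact_mod_cast hk
    rw [h1]; push_cast; linarith
  have hR := cos_sum_bound (((n : ℝ) + 1) / 2 * x) x ((n - 1) / 2 + 1) hsinne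
  have hRb : |∑ j ∈ Finset.range ((n - 1) / 2 + 1),
      Real.cos (((n : ℝ) + 1) / 2 * x + 2 * j * x)| ≤ π / 2 * (n : ℝ) ^ ν := by
    refine hR.trans ?_
    rw [abs_of_pos hsinpos, div_le_iff₀ hsinpos]
    have h1 : 2 / π * ε ≤ Real.sin x := le_trans hjordan hsinmono
    have hεν : ε * (n : ℝ) ^ ν = 1 := by
      rw [hε, ← Real.rpow_add hnpos]; simp
    have hπ : 0 < π := Real.pi_pos
    have hcancel : π / 2 * (n : ℝ) ^ ν * (2 / π * ε) = ε * (n : ℝ) ^ ν := by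
      field_simp
    calc (1:ℝ) = π / 2 * (n : ℝ) ^ ν * (2 / π * ε) := by rw [hcancel, hεν]
      _ ≤ π / 2 * (n : ℝ) ^ ν * Real.sin x := by
          apply mul_le_mul_of_nonneg_left h1
          positivity
  have hnν : (1:ℝ) ≤ (n : ℝ) ^ ν := Real.one_le_rpow hn1 hν0.le
  rw [nsmul_eq_mul, hcard]
  set S := ∑ j ∈ Finset.range ((n - 1) / 2 + 1),
      Real.cos (((n : ℝ) + 1) / 2 * x + 2 * j * x) with hS
  have heq : ((n : ℝ) + 1) / 2 * (1 / 2) + S / 2 - (n : ℝ) / 4 = 1 / 4 + S / 2 := by ring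
  rw [heq]
  have h1 : |1 / 4 + S / 2| ≤ 1 / 4 + |S| / 2 := by
    refine (abs_add_le _ _).trans ?_
    have h2 : |S / 2| = |S| / 2 := by rw [abs_div]; norm_num
    rw [h2, abs_of_nonneg (by norm_num : (0:ℝ) ≤ 1/4)]
  have hπ := Real.pi_pos
  calc |1 / 4 + S / 2| ≤ 1 / 4 + π / 2 * (n : ℝ) ^ ν / 2 := by linarith [hRb, h1]
    _ ≤ (1 + π) * (n : ℝ) ^ ν := by nlinarith
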